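/- For the star graph S_n on n ≥ 2 vertices and any detection probability parameter p ∈ [0,1], the performance measure satisfies μ(S_n) = (n − 2p)/(2n). -/

import Mathlib

open SimpleGraph Finset
open scoped Classical

/-- Total distance: sum of geodesic distances over all ordered pairs of vertices. -/
noncomputable def totalDist {n : ℕ} (g : SimpleGraph (Fin n)) : ℕ :=
  ∑ i : Fin n, ∑ j : Fin n, g.dist i j

/-- Information measure K(g) = n(n-1)/T(g). -/
noncomputable def infoMeasure {n : ℕ} (g : SimpleGraph (Fin n)) : ℝ :=
  ((n : ℝ) * ((n : ℝ) - 1)) / (totalDist g : ℝ)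

/-- Secrecy measure H(g) = (1/n) Σ_i u_i with u_i = 1 - (p d_i + 1)/n. -/
noncomputable def secrecy {n : ℕ} (g : SimpleGraph (Fin n)) (p : ℝ) : ℝ :=
  (1 / (n : ℝ)) * ∑ i : Fin n, (1 - (p * (g.degree i : ℝ) + 1) / (n : ℝ))

/-- Performance measure μ(g) = H(g) · K(g). -/
noncomputable def perf {n : ℕ} (g : SimpleGraph (Fin n)) (p : ℝ) : ℝ :=
  secrecy g p * infoMeasure g

/-- Star graph on `Fin n`: vertex 0 adjacent to all others, no other edges. -/
def starGraph (n : ℕ) : SimpleGraph (Fin n) where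
  Adj i j := i ≠ j ∧ ((i : ℕ) = 0 ∨ (j : ℕ) = 0)
  symm := ⟨fun i j h => ⟨h.1.symm, h.2.symm⟩⟩
  loopless := ⟨fun i h => h.1 rfl⟩


lemma star_dist {n : ℕ} (hn : 2 ≤ n) (i j : Fin n) :
    (_root_.starGraph n).dist i j =
      if i = j then 0 else if (i : ℕ) = 0 ∨ (j : ℕ) = 0 then 1 else 2 := by
  haveI : NeZero n := ⟨by omega⟩
  by_cases hij : i = j
  · simp [hij]
  · by_cases h0 : (i : ℕ) = 0 ∨ (j : ℕ) = 0
    · simp only [hij, h0, if_false, if_true]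
      exact (SimpleGraph.dist_eq_one_iff_adj).mpr ⟨hij, h0⟩
    · push_neg at h0
      simp only [hij, if_false]
      rw [if_neg (by push_neg; exact h0)]
      have hi0 : i ≠ 0 := fun h => h0.1 (by simp [h])
      have hj0 : j ≠ 0 := fun h => h0.2 (by simp [h])
      have hadj1 : (_root_.starGraph n).Adj i 0 := ⟨hi0, Or.inr (by simp)⟩
      have hadj2 : (_root_.starGraph n).Adj 0 j := ⟨fun h => hj0 h.symm, Or.inl (by simp)⟩
      let w : (_root_.starGraph n).Walk i j := .cons hadj1 (.cons hadj2 .nil)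
      have hle : (_root_.starGraph n).dist i j ≤ 2 := by
        have := SimpleGraph.dist_le w
        simpa [w] using this
      have hr : (_root_.starGraph n).Reachable i j := ⟨w⟩
      have hpos : 0 < (_root_.starGraph n).dist i j := hr.pos_dist_of_ne hij
      have hne1 : (_root_.starGraph n).dist i j ≠ 1 := by
        intro h
        have := (SimpleGraph.dist_eq_one_iff_adj).mp h
        exact (not_or.mpr h0) this.2
      omega


lemma star_degree_zero {n : ℕ} [NeZero n] :
    (_root_.starGraph n).degree (0 : Fin n) = n - 1 := by
  rw [SimpleGraph.degree]
  have h : (_root_.starGraph n).neighborFinset 0 = Finset.univ.erase 0 := by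
    ext j
    simp only [SimpleGraph.mem_neighborFinset, Finset.mem_erase, Finset.mem_univ, and_true]
    constructor
    · rintro ⟨h1, _⟩; exact fun h => h1 h.symm
    · intro h; exact ⟨fun h' => h h'.symm, Or.inl (Fin.val_zero n)⟩
  rw [h, Finset.card_erase_of_mem (Finset.mem_univ _), Finset.card_univ, Fintype.card_fin]

lemma star_degree_ne {n : ℕ} [NeZero n] (i : Fin n) (hi : (i : ℕ) ≠ 0) :
    (_root_.starGraph n).degree i = 1 := by
  rw [SimpleGraph.degree]
  have h : (_root_.starGraph n).neighborFinset i = {0} := by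
    ext j
    simp only [SimpleGraph.mem_neighborFinset, Finset.mem_singleton]
    constructor
    · rintro ⟨h1, h2 | h2⟩
      · exact absurd h2 hi
      · exact Fin.ext (by rw [h2, Fin.val_zero])
    · rintro rfl
      exact ⟨fun h => hi (by rw [h, Fin.val_zero]), Or.inr (Fin.val_zero n)⟩
  rw [h, Finset.card_singleton]

lemma star_totalDist {m : ℕ} :
    (∑ i : Fin (m + 2), ∑ j : Fin (m + 2), (_root_.starGraph (m + 2)).dist i j)
      = 2 * (m + 1) * (m + 1) := by
  have hn : 2 ≤ m + 2 := by omega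
  have hzero : ((0 : Fin (m + 2)) : ℕ) = 0 := rfl
  have hinner : ∀ i : Fin (m + 2), (∑ j : Fin (m + 2), (_root_.starGraph (m + 2)).dist i j)
      = if (i : ℕ) = 0 then m + 1 else 2 * m + 1 := by
    intro i
    rw [Finset.sum_congr rfl (fun j _ => star_dist hn i j)]
    rw [← Finset.add_sum_erase Finset.univ _ (Finset.mem_univ i), if_pos rfl, zero_add]
    by_cases hi : (i : ℕ) = 0
    · rw [if_pos hi]
      have : ∀ j ∈ Finset.univ.erase i,
          (if i = j then 0 else if (i : ℕ) = 0 ∨ (j : ℕ) = 0 then 1 else 2) = 1 := by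
        intro j hj
        rw [if_neg (fun h => (Finset.mem_erase.mp hj).1 h.symm), if_pos (Or.inl hi)]
      rw [Finset.sum_congr rfl this, Finset.sum_const, smul_eq_mul, mul_one,
        Finset.card_erase_of_mem (Finset.mem_univ _), Finset.card_univ, Fintype.card_fin]
      omega
    · rw [if_neg hi]
      have h0mem : (0 : Fin (m + 2)) ∈ Finset.univ.erase i :=
        Finset.mem_erase.mpr ⟨fun h => hi (by rw [← h]; rfl), Finset.mem_univ _⟩
      rw [← Finset.add_sum_erase _ _ h0mem]
      rw [if_neg (fun h => hi (by rw [h]; rfl)), if_pos (Or.inr hzero)]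
      have : ∀ j ∈ (Finset.univ.erase i).erase 0,
          (if i = j then 0 else if (i : ℕ) = 0 ∨ (j : ℕ) = 0 then 1 else 2) = 2 := by
        intro j hj
        have hj' := Finset.mem_erase.mp hj
        have hji := (Finset.mem_erase.mp hj'.2).1
        rw [if_neg (fun h => hji h.symm), if_neg]
        push_neg
        exact ⟨hi, fun h => hj'.1 (Fin.ext h)⟩
      rw [Finset.sum_congr rfl this, Finset.sum_const, smul_eq_mul,
        Finset.card_erase_of_mem h0mem,
        Finset.card_erase_of_mem (Finset.mem_univ _), Finset.card_univ, Fintype.card_fin]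
      omega
  rw [Finset.sum_congr rfl (fun i _ => hinner i)]
  rw [← Finset.add_sum_erase Finset.univ _ (Finset.mem_univ (0 : Fin (m + 2)))]
  rw [if_pos hzero]
  have : ∀ i ∈ Finset.univ.erase (0 : Fin (m + 2)),
      (if (i : ℕ) = 0 then m + 1 else 2 * m + 1) = 2 * m + 1 := by
    intro i hi
    rw [if_neg (fun h => (Finset.mem_erase.mp hi).1 (Fin.ext (h.trans hzero.symm)))]
  rw [Finset.sum_congr rfl this, Finset.sum_const, smul_eq_mul,
    Finset.card_erase_of_mem (Finset.mem_univ _), Finset.card_univ, Fintype.card_fin]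
  have h1 : m + 2 - 1 = m + 1 := rfl
  rw [h1]; ring

/-- μ(S_n) = (n - 2p)/(2n) for n ≥ 2 and p ∈ [0,1]. -/
theorem perf_star {n : ℕ} (hn : 2 ≤ n) (p : ℝ) (hp0 : 0 ≤ p) (hp1 : p ≤ 1) :
    perf (starGraph n) p = ((n : ℝ) - 2 * p) / (2 * (n : ℝ)) := by
  obtain ⟨m, rfl⟩ : ∃ m, n = m + 2 := ⟨n - 2, by omega⟩
  have hT : totalDist (_root_.starGraph (m + 2)) = 2 * (m + 1) * (m + 1) := star_totalDist
  have hd0 : (_root_.starGraph (m + 2)).degree (0 : Fin (m + 2)) = m + 1 := star_degree_zero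
  have hS : (∑ i : Fin (m + 2),
      (1 - (p * ((_root_.starGraph (m + 2)).degree i : ℝ) + 1) / ((m + 2 : ℕ) : ℝ)))
      = (1 - (p * ((m : ℝ) + 1) + 1) / ((m + 2 : ℕ) : ℝ))
        + ((m : ℝ) + 1) * (1 - (p + 1) / ((m + 2 : ℕ) : ℝ)) := by
    rw [← Finset.add_sum_erase Finset.univ _ (Finset.mem_univ (0 : Fin (m + 2)))]
    rw [hd0]
    have hc : ∀ i ∈ Finset.univ.erase (0 : Fin (m + 2)),
        (1 - (p * ((_root_.starGraph (m + 2)).degree i : ℝ) + 1) / ((m + 2 : ℕ) : ℝ))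
          = 1 - (p + 1) / ((m + 2 : ℕ) : ℝ) := by
      intro i hi
      have : (_root_.starGraph (m + 2)).degree i = 1 :=
        star_degree_ne i (fun h => (Finset.mem_erase.mp hi).1 (Fin.ext h))
      rw [this]
      norm_num
    rw [Finset.sum_congr rfl hc, Finset.sum_const,
      Finset.card_erase_of_mem (Finset.mem_univ _), Finset.card_univ, Fintype.card_fin]
    push_cast
    ring
  unfold perf secrecy infoMeasure
  rw [hS, hT]
  have hN : ((m + 2 : ℕ) : ℝ) = (m : ℝ) + 2 := by push_cast; ring
  have hm1 : (m : ℝ) + 1 ≠ 0 := by positivity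
  have hm2 : (m : ℝ) + 2 ≠ 0 := by positivity
  rw [hN]
  push_cast
  field_simp
  ring
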